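/- arXiv:2108.03915 — 4 statements merged into one kernel-verified Lean document; each statement's English description precedes it below -/
import Mathlib

section
/- Let P = {p₁,…,pₙ} be a finite poset and let β ≤ γ be order ideals of P (β ⊆ γ). Let L₁ = {α ∈ I(P) : β ⊆ α ⊆ γ} and let H₁ be the additive submonoid of ℤ^{n+1} generated by {h_α : α ∈ L₁}. Then H₁ is a homologically pure subsemigroup of H; that is, for every h ∈ H₁ and every order ideal α ∈ I(P), if h − h_α ∈ H then α ∈ L₁. -/
/-- The vector `h_α ∈ ℕ^{n+1} ⊆ ℤ^{n+1}` attached to a subset `α` of `P`: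
its first coordinate (index `none`) is `1`, and its coordinate at `p ∈ P`
is `1` if `p ∈ α` and `0` otherwise. -/
noncomputable def hvec {P : Type*} (α : Set P) : Option P → ℤ :=
  fun o => o.elim 1 (fun p => Set.indicator α (fun _ => (1 : ℤ)) p)

theorem stmt4 (P : Type*) [Finite P] [PartialOrder P]
    (β γ : Set P) (hβ : IsLowerSet β) (hγ : IsLowerSet γ) (hβγ : β ⊆ γ) :
    ∀ h ∈ AddSubmonoid.closure
        {v : Option P → ℤ | ∃ α : Set P, IsLowerSet α ∧ β ⊆ α ∧ α ⊆ γ ∧ v = hvec α},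
      ∀ α : Set P, IsLowerSet α →
        h - hvec α ∈ AddSubmonoid.closure
          {v : Option P → ℤ | ∃ α : Set P, IsLowerSet α ∧ v = hvec α} →
        β ⊆ α ∧ α ⊆ γ := by
  intro h hh α hα hmem
  -- Elements of the small monoid: coordinate at p∈β equals coordinate at none,
  -- and coordinate at p∉γ is 0.
  have hQ' : ∀ g ∈ AddSubmonoid.closure
      {v : Option P → ℤ | ∃ α : Set P, IsLowerSet α ∧ β ⊆ α ∧ α ⊆ γ ∧ v = hvec α},
      (∀ p ∈ β, g (some p) = g none) ∧ (∀ p, p ∉ γ → g (some p) = 0) := by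
    intro g hg
    induction hg using AddSubmonoid.closure_induction with
    | mem v hv =>
      obtain ⟨δ, hδ, hβδ, hδγ, rfl⟩ := hv
      refine ⟨fun p hp => ?_, fun p hp => ?_⟩
      · simp [hvec, Set.indicator_of_mem (hβδ hp)]
      · simp [hvec, Set.indicator_of_notMem (fun hc => hp (hδγ hc))]
    | zero => simp
    | add a b _ _ iha ihb =>
      refine ⟨fun p hp => ?_, fun p hp => ?_⟩
      · simp [iha.1 p hp, ihb.1 p hp]
      · simp [iha.2 p hp, ihb.2 p hp]
  -- Elements of the big monoid are nonneg and dominated by the `none` coordinate.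
  have hQ := hQ' h hh
  have hR' : ∀ w ∈ AddSubmonoid.closure
      {v : Option P → ℤ | ∃ α : Set P, IsLowerSet α ∧ v = hvec α},
      (∀ o, 0 ≤ w o) ∧ (∀ p, w (some p) ≤ w none) := by
    intro w hw
    induction hw using AddSubmonoid.closure_induction with
    | mem v hv =>
      obtain ⟨δ, hδ, rfl⟩ := hv
      refine ⟨fun o => ?_, fun p => ?_⟩
      · cases o with
        | none => simp [hvec]
        | some p =>
          simp only [hvec, Option.elim]
          exact Set.indicator_nonneg (fun _ _ => zero_le_one) p
      · simp only [hvec, Option.elim]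
        exact Set.indicator_le_self' (fun _ _ => zero_le_one) p |>.trans (by
          by_cases hp : p ∈ δ <;> simp [Set.indicator, hp])
    | zero => simp
    | add a b _ _ iha ihb =>
      refine ⟨fun o => ?_, fun p => ?_⟩
      · simpa using add_nonneg (iha.1 o) (ihb.1 o)
      · simpa using add_le_add (iha.2 p) (ihb.2 p)
  have hR := hR' _ hmem
  constructor
  · intro p hp
    have h1 := hR.2 p
    simp only [Pi.sub_apply, hvec, Option.elim] at h1
    rw [hQ.1 p hp] at h1
    by_contra hc
    simp [Set.indicator_of_notMem hc] at h1
  · intro p hp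
    by_contra hc
    have h1 := hR.1 (some p)
    simp only [Pi.sub_apply, hvec, Option.elim] at h1
    rw [hQ.2 p hc, Set.indicator_of_mem hp] at h1
    norm_num at h1
end

section
/- Let P = {p₁,…,pₙ} be a finite poset and let x, y ∈ P with x < y. Let L₁ = {α ∈ I(P) : x ∈ α implies y ∈ α} and let H' be the additive submonoid of ℤ^{n+1} generated by {h_α : α ∈ L₁}. Then H' is a homologically pure subsemigroup of H; that is, for every h ∈ H' and every order ideal α ∈ I(P), if h − h_α ∈ H then α ∈ L₁ (equivalently, if x ∈ α and y ∉ α then h − h_α ∉ H for all h ∈ H'). -/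
open Classical in
lemma hvec_some {P : Type*} (α : Set P) (p : P) :
    hvec α (some p) = if p ∈ α then 1 else 0 := by
  simp [hvec, Set.indicator]

theorem stmt7 (P : Type*) [Finite P] [PartialOrder P] (x y : P) (hxy : x < y) :
    ∀ h ∈ AddSubmonoid.closure
        {v : Option P → ℤ | ∃ α : Set P, IsLowerSet α ∧ (x ∈ α → y ∈ α) ∧ v = hvec α},
      ∀ α : Set P, IsLowerSet α →
        h - hvec α ∈ AddSubmonoid.closure
          {v : Option P → ℤ | ∃ α : Set P, IsLowerSet α ∧ v = hvec α} →
        (x ∈ α → y ∈ α) := by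
  classical
  have h1 : ∀ h ∈ AddSubmonoid.closure
      {v : Option P → ℤ | ∃ α : Set P, IsLowerSet α ∧ (x ∈ α → y ∈ α) ∧ v = hvec α},
      h (some x) ≤ h (some y) := by
    intro h hh
    induction hh using AddSubmonoid.closure_induction with
    | mem v hv =>
      obtain ⟨β, -, hβ, rfl⟩ := hv
      rw [hvec_some, hvec_some]
      by_cases hx : x ∈ β
      · simp [hx, hβ hx]
      · simp only [if_neg hx]
        split <;> norm_num
    | zero => exact le_refl _
    | add a b _ _ ha hb => exact add_le_add ha hb
  have h2 : ∀ g ∈ AddSubmonoid.closure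
      {v : Option P → ℤ | ∃ α : Set P, IsLowerSet α ∧ v = hvec α},
      g (some y) ≤ g (some x) := by
    intro g hg
    induction hg using AddSubmonoid.closure_induction with
    | mem v hv =>
      obtain ⟨β, hβ, rfl⟩ := hv
      rw [hvec_some, hvec_some]
      by_cases hyb : y ∈ β
      · simp [hyb, hβ hxy.le hyb]
      · simp only [if_neg hyb]
        split <;> norm_num
    | zero => exact le_refl _
    | add a b _ _ ha hb => exact add_le_add ha hb
  intro h hh α hα hmem hxα
  by_contra hyα
  have := h1 h hh
  have h2' := h2 _ hmem
  simp only [Pi.sub_apply, hvec_some, if_pos hxα, if_neg hyα] at h2'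
  omega
end

section
/- Let P be a finite connected poset (i.e., the comparability graph of P is connected) with at least two minimal elements and at least two maximal elements. Then there exist two maximal chains C₁ and C₂ of P, each containing at least two elements, such that the least element of C₁ is different from the least element of C₂ and the greatest element of C₁ is different from the greatest element of C₂. -/
/-- The comparability graph of a poset: `x` and `y` are adjacent iff `x ≠ y`
and `x, y` are comparable. -/
def comparabilityGraph (P : Type*) [PartialOrder P] : SimpleGraph P where
  Adj a b := a ≠ b ∧ (a ≤ b ∨ b ≤ a)
  symm := by
    constructor
    rintro a b ⟨hab, h⟩
    exact ⟨hab.symm, h.symm⟩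
  loopless := by
    constructor
    rintro a ⟨h, -⟩
    exact h rfl

section Aux

variable {P : Type*} [Finite P] [PartialOrder P]

lemma aux_maxChain_nonempty [Nonempty P] {C : Set P} (h : IsMaxChain (· ≤ ·) C) :
    C.Nonempty := by
  by_contra hne
  rw [Set.not_nonempty_iff_eq_empty] at hne
  obtain ⟨x⟩ := ‹Nonempty P›
  have h2 := h.2 (t := {x}) (Set.subsingleton_singleton.isChain) (by simp [hne])
  rw [hne] at h2
  exact Set.singleton_ne_empty x h2.symm

lemma aux_exists_least {C : Set P} (hC : IsChain (· ≤ ·) C) (hne : C.Nonempty) :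
    ∃ a, IsLeast C a := by
  obtain ⟨a, haC, ha⟩ : ∃ a ∈ C, ∀ b ∈ C, b ≤ a → a = b := by
    obtain ⟨a, ha⟩ := (Set.toFinite C).exists_minimal hne
    exact ⟨a, ha.prop, fun b hb h => (ha.eq_of_le hb h).symm⟩
  refine ⟨a, haC, fun b hb => ?_⟩
  rcases eq_or_ne a b with rfl | hab
  · exact le_rfl
  · rcases hC haC hb hab with h | h
    · exact h
    · exact (ha b hb h).le

lemma aux_exists_greatest {C : Set P} (hC : IsChain (· ≤ ·) C) (hne : C.Nonempty) :
    ∃ a, IsGreatest C a := by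
  obtain ⟨a, ha⟩ := aux_exists_least (P := Pᵒᵈ) hC.symm hne
  exact ⟨a, ha⟩

lemma aux_least_isMin {C : Set P} (h : IsMaxChain (· ≤ ·) C) {a : P} (ha : IsLeast C a) :
    IsMin a := by
  intro y hy
  rcases eq_or_ne y a with rfl | hya
  · exact le_rfl
  · exfalso
    have hchain : IsChain (· ≤ ·) (insert y C) := by
      refine h.1.insert fun b hb _ => Or.inl (hy.trans (ha.2 hb))
    have := h.2 hchain (Set.subset_insert _ _)
    have hyC : y ∈ C := this ▸ Set.mem_insert y C
    exact hya (le_antisymm hy (ha.2 hyC))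

lemma aux_greatest_isMax {C : Set P} (h : IsMaxChain (· ≤ ·) C) {a : P} (ha : IsGreatest C a) :
    IsMax a := by
  intro y hy
  rcases eq_or_ne y a with rfl | hya
  · exact le_rfl
  · exfalso
    have hchain : IsChain (· ≤ ·) (insert y C) := by
      refine h.1.insert fun b hb _ => Or.inr ((ha.2 hb).trans hy)
    have := h.2 hchain (Set.subset_insert _ _)
    have hyC : y ∈ C := this ▸ Set.mem_insert y C
    exact hya (le_antisymm (ha.2 hyC) hy)

lemma aux_not_min_max (hconn : (comparabilityGraph P).Connected)
    {a b : P} (hab : a ≠ b) (hamin : IsMin a) (hamax : IsMax a) : False := by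
  have hreach := hconn.preconnected a b
  obtain ⟨w⟩ := hreach
  cases w with
  | nil => exact hab rfl
  | cons h p =>
    obtain ⟨hne, hcomp⟩ := h
    rcases hcomp with h1 | h1
    · exact hne (le_antisymm h1 (hamax h1))
    · exact hne (le_antisymm (hamin h1) h1)

/-- Every element lies in some maximal chain, which has a least element equal to
a minimal element ≤ x etc. Extract a maximal chain through x, with its least and greatest. -/
lemma aux_chain_through (hconn : (comparabilityGraph P).Connected)
    (hP : ∃ u v : P, u ≠ v) (x : P) :
    ∃ C a b, IsMaxChain (· ≤ ·) C ∧ x ∈ C ∧ IsLeast C a ∧ IsGreatest C b ∧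
      IsMin a ∧ IsMax b ∧ a ≠ b := by
  obtain ⟨u, v, huv⟩ := hP
  have : Nonempty P := ⟨x⟩
  obtain ⟨C, hC, hxC⟩ := (Set.subsingleton_singleton (a := x)).isChain.exists_maxChain
  have hne : C.Nonempty := aux_maxChain_nonempty hC
  obtain ⟨a, ha⟩ := aux_exists_least hC.1 hne
  obtain ⟨b, hb⟩ := aux_exists_greatest hC.1 hne
  have hamin := aux_least_isMin hC ha
  have hbmax := aux_greatest_isMax hC hb
  refine ⟨C, a, b, hC, hxC (Set.mem_singleton x), ha, hb, hamin, hbmax, ?_⟩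
  rintro rfl
  rcases eq_or_ne a u with rfl | h
  · exact aux_not_min_max hconn huv hamin hbmax
  · exact aux_not_min_max hconn h hamin hbmax

end Aux

theorem stmt9 (P : Type*) [Finite P] [PartialOrder P]
    (hconn : (comparabilityGraph P).Connected)
    (hmin : ∃ a b : P, a ≠ b ∧ IsMin a ∧ IsMin b)
    (hmax : ∃ a b : P, a ≠ b ∧ IsMax a ∧ IsMax b) :
    ∃ C₁ C₂ : Set P, IsMaxChain (· ≤ ·) C₁ ∧ IsMaxChain (· ≤ ·) C₂ ∧
      ∃ a₁ b₁ a₂ b₂ : P,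
        IsLeast C₁ a₁ ∧ IsGreatest C₁ b₁ ∧ IsLeast C₂ a₂ ∧ IsGreatest C₂ b₂ ∧
        a₁ ≠ b₁ ∧ a₂ ≠ b₂ ∧ a₁ ≠ a₂ ∧ b₁ ≠ b₂ := by
  obtain ⟨m₁, m₂, hm, hmin₁, hmin₂⟩ := hmin
  obtain ⟨M₁, M₂, hM, hmax₁, hmax₂⟩ := hmax
  have hP : ∃ u v : P, u ≠ v := ⟨m₁, m₂, hm⟩
  obtain ⟨C, a, t, hC, hmC, haC, htC, hamin, htmax, hat⟩ := aux_chain_through hconn hP m₁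
  have ha : m₁ = a := (le_antisymm (haC.2 hmC) (hmin₁ (haC.2 hmC))).symm
  subst ha
  obtain ⟨D, a', s, hD, hmD, haD, hsD, hamin', hsmax', hat'⟩ := aux_chain_through hconn hP m₂
  have ha' : m₂ = a' := (le_antisymm (haD.2 hmD) (hmin₂ (haD.2 hmD))).symm
  subst ha'
  rcases eq_or_ne s t with rfl | hst
  · -- tops coincide; use a chain through a maximal element M ≠ s
    obtain ⟨M, hMmax, hMs⟩ : ∃ M, IsMax M ∧ M ≠ s := by
      rcases eq_or_ne M₁ s with rfl | h
      · exact ⟨M₂, hmax₂, Ne.symm hM⟩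
      · exact ⟨M₁, hmax₁, h⟩
    obtain ⟨E, u, b', hE, hME, huE, hbE, humin, hbmax', hub⟩ := aux_chain_through hconn hP M
    have hb' : M = b' := (le_antisymm (hMmax (hbE.2 hME)) (hbE.2 hME)).symm
    subst hb'
    rcases eq_or_ne u m₁ with rfl | hu
    · exact ⟨E, D, hE, hD, u, M, m₂, s, huE, hbE, haD, hsD, hub, hat', hm, hMs⟩
    · exact ⟨C, E, hC, hE, m₁, s, u, M, haC, htC, huE, hbE, hat, hub, (Ne.symm hu), fun h => hMs h.symm⟩
  · exact ⟨C, D, hC, hD, m₁, t, m₂, s, haC, htC, haD, hsD, hat, hat', hm, fun h => hst h.symm⟩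
end

section
/- Let P be a finite poset, let P' be the set of all elements of P comparable to every element of P, and let P'' be the induced subposet of P on P \ P'. Let L = I(P) be the distributive lattice of order ideals of P and let G_L be its comparability graph. Then G_L is chordal if and only if P is a chain, or P'' is the disjoint union of a chain and a single isolated element (i.e., there exists q ∈ P'' such that P'' \ {q} is a chain and q is incomparable with every element of P'' \ {q}). -/
namespace Stmt11Aux

lemma cyc_nonadj {N : ℕ} (a b : Fin N) (h1 : a.val + 1 < b.val) (h2 : b.val + 1 < a.val + N) :
    ¬ (SimpleGraph.cycleGraph N).Adj a b := by
  have ha := a.isLt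
  have hb := b.isLt
  rw [SimpleGraph.cycleGraph_adj']
  push_neg
  constructor
  · rw [Fin.sub_def]
    dsimp only
    rw [Nat.mod_eq_of_lt (by omega)]
    omega
  · rw [Fin.sub_def]
    dsimp only
    have h3 : N - a.val + b.val = N + (b.val - a.val) := by omega
    rw [h3, Nat.add_mod_left, Nat.mod_eq_of_lt (by omega)]
    omega

variable {P : Type*} [PartialOrder P]

lemma not_adj_of_incomp {a b : {α : Set P // IsLowerSet α}}
    (h1 : ¬ a.1 ⊆ b.1) (h2 : ¬ b.1 ⊆ a.1) : ¬ (comparabilityGraph _).Adj a b := by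
  rintro ⟨-, h | h⟩ <;> [exact h1 h; exact h2 h]

lemma adj_of_ssub {a b : {α : Set P // IsLowerSet α}}
    (h : a.1 ⊆ b.1) (h2 : ¬ b.1 ⊆ a.1) : (comparabilityGraph _).Adj a b := by
  refine ⟨fun e => h2 (e ▸ subset_rfl), Or.inl h⟩

lemma ne_of_incomp {a b : {α : Set P // IsLowerSet α}}
    (h1 : ¬ a.1 ⊆ b.1) : a ≠ b := fun e => h1 (e ▸ subset_rfl)

lemma c4_embed {a b c d : P}
    (hab : a < b) (hcd : c < d) (hac : ¬a ≤ c) (hca : ¬c ≤ a)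
    (hbd : ¬b ≤ d) (hdb : ¬d ≤ b) :
    Nonempty (SimpleGraph.cycleGraph 4 ↪g comparabilityGraph {α : Set P // IsLowerSet α}) := by
  set A0 : {α : Set P // IsLowerSet α} := ⟨{x | x ≤ a}, fun u v h hu => h.trans hu⟩ with hA0
  set A1 : {α : Set P // IsLowerSet α} :=
    ⟨{x | x ≤ b ∨ x ≤ c}, fun u v h hu => hu.imp (h.trans ·) (h.trans ·)⟩ with hA1
  set A2 : {α : Set P // IsLowerSet α} := ⟨{x | x ≤ c}, fun u v h hu => h.trans hu⟩ with hA2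
  set A3 : {α : Set P // IsLowerSet α} :=
    ⟨{x | x ≤ a ∨ x ≤ d}, fun u v h hu => hu.imp (h.trans ·) (h.trans ·)⟩ with hA3
  have s01 : A0.1 ⊆ A1.1 := fun x hx => Or.inl (le_trans hx hab.le)
  have n10 : ¬ A1.1 ⊆ A0.1 := fun h => hca (h (Or.inr le_rfl))
  have s21 : A2.1 ⊆ A1.1 := fun x hx => Or.inr hx
  have n12 : ¬ A1.1 ⊆ A2.1 := fun h => hac (hab.le.trans (h (Or.inl le_rfl)))
  have s23 : A2.1 ⊆ A3.1 := fun x hx => Or.inr (le_trans hx hcd.le)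
  have n32 : ¬ A3.1 ⊆ A2.1 := fun h => hac (h (Or.inl le_rfl))
  have s03 : A0.1 ⊆ A3.1 := fun x hx => Or.inl hx
  have n30 : ¬ A3.1 ⊆ A0.1 := fun h => hdb ((h (Or.inr le_rfl)).trans hab.le)
  have n02 : ¬ A0.1 ⊆ A2.1 := fun h => hac (h le_rfl)
  have n20 : ¬ A2.1 ⊆ A0.1 := fun h => hca (h le_rfl)
  have n13 : ¬ A1.1 ⊆ A3.1 := by
    intro h
    rcases h (Or.inl le_rfl) with h' | h'
    · exact absurd (hab.trans_le h') (lt_irrefl a)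
    · exact hbd h'
  have n31 : ¬ A3.1 ⊆ A1.1 := by
    intro h
    rcases h (Or.inr le_rfl) with h' | h'
    · exact hdb h'
    · exact absurd (hcd.trans_le h') (lt_irrefl c)
  have e01 := adj_of_ssub s01 n10
  have e12 := (adj_of_ssub s21 n12).symm
  have e23 := adj_of_ssub s23 n32
  have e30 := (adj_of_ssub s03 n30).symm
  have m02 := not_adj_of_incomp n02 n20
  have m13 := not_adj_of_incomp n13 n31
  have d01 : A0 ≠ A1 := e01.ne
  have d12 : A1 ≠ A2 := e12.ne
  have d23 : A2 ≠ A3 := e23.ne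
  have d30 : A3 ≠ A0 := e30.ne
  have d02 : A0 ≠ A2 := ne_of_incomp n02
  have d13 : A1 ≠ A3 := ne_of_incomp n13
  refine ⟨⟨⟨![A0, A1, A2, A3], ?_⟩, ?_⟩⟩
  · intro i j
    fin_cases i <;> fin_cases j <;>
      simp only [Matrix.cons_val_zero, Matrix.cons_val_one, Matrix.head_cons,
        Matrix.cons_val_two, Matrix.cons_val_three, Matrix.tail_cons, Matrix.cons_val_fin_one] <;>
      intro h <;>
      first | rfl | trivial
            | exact absurd h d01 | exact absurd h d12 | exact absurd h d23
            | exact absurd h.symm d30 | exact absurd h d02 | exact absurd h d13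
            | exact absurd h.symm d01 | exact absurd h.symm d12 | exact absurd h.symm d23
            | exact absurd h d30 | exact absurd h.symm d02 | exact absurd h.symm d13
  · intro i j
    fin_cases i <;> fin_cases j <;>
      simp only [Function.Embedding.coeFn_mk, Matrix.cons_val_zero, Matrix.cons_val_one,
        Matrix.head_cons, Matrix.cons_val_two, Matrix.cons_val_three, Matrix.tail_cons,
        Matrix.cons_val_fin_one] <;>
      first
        | (exact iff_of_false (comparabilityGraph _).irrefl (by decide))
        | (exact iff_of_true (by first | exact e01 | exact e12 | exact e23 | exact e30
                                       | exact e01.symm | exact e12.symm | exact e23.symm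
                                       | exact e30.symm) (by decide))
        | (exact iff_of_false (by first | exact m02 | exact m13
                                        | exact fun h => m02 h.symm
                                        | exact fun h => m13 h.symm) (by decide))

set_option maxHeartbeats 2000000 in
lemma c6_embed {x y z : P}
    (hxy : ¬x ≤ y) (hyx : ¬y ≤ x) (hyz : ¬y ≤ z) (hzy : ¬z ≤ y)
    (hxz : ¬x ≤ z) (hzx : ¬z ≤ x) :
    Nonempty (SimpleGraph.cycleGraph 6 ↪g comparabilityGraph {α : Set P // IsLowerSet α}) := by
  set A0 : {α : Set P // IsLowerSet α} := ⟨{t | t ≤ x}, fun u v h hu => h.trans hu⟩ with hA0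
  set A1 : {α : Set P // IsLowerSet α} :=
    ⟨{t | t ≤ x ∨ t ≤ y}, fun u v h hu => hu.imp (h.trans ·) (h.trans ·)⟩ with hA1
  set A2 : {α : Set P // IsLowerSet α} := ⟨{t | t ≤ y}, fun u v h hu => h.trans hu⟩ with hA2
  set A3 : {α : Set P // IsLowerSet α} :=
    ⟨{t | t ≤ y ∨ t ≤ z}, fun u v h hu => hu.imp (h.trans ·) (h.trans ·)⟩ with hA3
  set A4 : {α : Set P // IsLowerSet α} := ⟨{t | t ≤ z}, fun u v h hu => h.trans hu⟩ with hA4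
  set A5 : {α : Set P // IsLowerSet α} :=
    ⟨{t | t ≤ z ∨ t ≤ x}, fun u v h hu => hu.imp (h.trans ·) (h.trans ·)⟩ with hA5
  have s01 : A0.1 ⊆ A1.1 := fun t ht => Or.inl ht
  have n10 : ¬ A1.1 ⊆ A0.1 := fun h => hyx (h (Or.inr le_rfl))
  have s21 : A2.1 ⊆ A1.1 := fun t ht => Or.inr ht
  have n12 : ¬ A1.1 ⊆ A2.1 := fun h => hxy (h (Or.inl le_rfl))
  have s23 : A2.1 ⊆ A3.1 := fun t ht => Or.inl ht
  have n32 : ¬ A3.1 ⊆ A2.1 := fun h => hzy (h (Or.inr le_rfl))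
  have s43 : A4.1 ⊆ A3.1 := fun t ht => Or.inr ht
  have n34 : ¬ A3.1 ⊆ A4.1 := fun h => hyz (h (Or.inl le_rfl))
  have s45 : A4.1 ⊆ A5.1 := fun t ht => Or.inl ht
  have n54 : ¬ A5.1 ⊆ A4.1 := fun h => hxz (h (Or.inr le_rfl))
  have s05 : A0.1 ⊆ A5.1 := fun t ht => Or.inr ht
  have n50 : ¬ A5.1 ⊆ A0.1 := fun h => hzx (h (Or.inl le_rfl))
  have n02 : ¬ A0.1 ⊆ A2.1 := fun h => hxy (h le_rfl)
  have n20 : ¬ A2.1 ⊆ A0.1 := fun h => hyx (h le_rfl)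
  have n04 : ¬ A0.1 ⊆ A4.1 := fun h => hxz (h le_rfl)
  have n40 : ¬ A4.1 ⊆ A0.1 := fun h => hzx (h le_rfl)
  have n24 : ¬ A2.1 ⊆ A4.1 := fun h => hyz (h le_rfl)
  have n42 : ¬ A4.1 ⊆ A2.1 := fun h => hzy (h le_rfl)
  have n03 : ¬ A0.1 ⊆ A3.1 := fun h => (h le_rfl).elim hxy hxz
  have n30 : ¬ A3.1 ⊆ A0.1 := fun h => hyx (h (Or.inl le_rfl))
  have n13 : ¬ A1.1 ⊆ A3.1 := fun h => (h (Or.inl le_rfl)).elim hxy hxz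
  have n31 : ¬ A3.1 ⊆ A1.1 := fun h => (h (Or.inr le_rfl)).elim hzx hzy
  have n14 : ¬ A1.1 ⊆ A4.1 := fun h => hxz (h (Or.inl le_rfl))
  have n41 : ¬ A4.1 ⊆ A1.1 := fun h => (h le_rfl).elim hzx hzy
  have n15 : ¬ A1.1 ⊆ A5.1 := fun h => (h (Or.inr le_rfl)).elim hyz hyx
  have n51 : ¬ A5.1 ⊆ A1.1 := fun h => (h (Or.inl le_rfl)).elim hzx hzy
  have n25 : ¬ A2.1 ⊆ A5.1 := fun h => (h le_rfl).elim hyz hyx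
  have n52 : ¬ A5.1 ⊆ A2.1 := fun h => hzy (h (Or.inl le_rfl))
  have n35 : ¬ A3.1 ⊆ A5.1 := fun h => (h (Or.inl le_rfl)).elim hyz hyx
  have n53 : ¬ A5.1 ⊆ A3.1 := fun h => (h (Or.inr le_rfl)).elim hxy hxz
  have e01 := adj_of_ssub s01 n10
  have e12 := (adj_of_ssub s21 n12).symm
  have e23 := adj_of_ssub s23 n32
  have e34 := (adj_of_ssub s43 n34).symm
  have e45 := adj_of_ssub s45 n54
  have e05 := adj_of_ssub s05 n50
  have m02 := not_adj_of_incomp n02 n20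
  have m03 := not_adj_of_incomp n03 n30
  have m04 := not_adj_of_incomp n04 n40
  have m13 := not_adj_of_incomp n13 n31
  have m14 := not_adj_of_incomp n14 n41
  have m15 := not_adj_of_incomp n15 n51
  have m24 := not_adj_of_incomp n24 n42
  have m25 := not_adj_of_incomp n25 n52
  have m35 := not_adj_of_incomp n35 n53
  have d01 : A0 ≠ A1 := e01.ne
  have d12 : A1 ≠ A2 := e12.ne
  have d23 : A2 ≠ A3 := e23.ne
  have d34 : A3 ≠ A4 := e34.ne
  have d45 : A4 ≠ A5 := e45.ne
  have d05 : A0 ≠ A5 := e05.ne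
  have d02 : A0 ≠ A2 := ne_of_incomp n02
  have d03 : A0 ≠ A3 := ne_of_incomp n03
  have d04 : A0 ≠ A4 := ne_of_incomp n04
  have d13 : A1 ≠ A3 := ne_of_incomp n13
  have d14 : A1 ≠ A4 := ne_of_incomp n14
  have d15 : A1 ≠ A5 := ne_of_incomp n15
  have d24 : A2 ≠ A4 := ne_of_incomp n24
  have d25 : A2 ≠ A5 := ne_of_incomp n25
  have d35 : A3 ≠ A5 := ne_of_incomp n35
  refine ⟨⟨⟨![A0, A1, A2, A3, A4, A5], ?_⟩, ?_⟩⟩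
  · intro i j
    fin_cases i <;> fin_cases j <;>
      simp only [Matrix.cons_val_zero, Matrix.cons_val_one, Matrix.head_cons,
        Matrix.cons_val_two, Matrix.cons_val_three, Matrix.cons_val_four,
        Matrix.tail_cons, Matrix.cons_val_fin_one] <;>
      intro h <;>
      first | rfl | trivial
            | exact absurd h d01 | exact absurd h.symm d01
            | exact absurd h d12 | exact absurd h.symm d12
            | exact absurd h d23 | exact absurd h.symm d23
            | exact absurd h d34 | exact absurd h.symm d34
            | exact absurd h d45 | exact absurd h.symm d45
            | exact absurd h d05 | exact absurd h.symm d05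
            | exact absurd h d02 | exact absurd h.symm d02
            | exact absurd h d03 | exact absurd h.symm d03
            | exact absurd h d04 | exact absurd h.symm d04
            | exact absurd h d13 | exact absurd h.symm d13
            | exact absurd h d14 | exact absurd h.symm d14
            | exact absurd h d15 | exact absurd h.symm d15
            | exact absurd h d24 | exact absurd h.symm d24
            | exact absurd h d25 | exact absurd h.symm d25
            | exact absurd h d35 | exact absurd h.symm d35
  · intro i j
    fin_cases i <;> fin_cases j <;>
      simp only [Function.Embedding.coeFn_mk, Matrix.cons_val_zero, Matrix.cons_val_one,
        Matrix.head_cons, Matrix.cons_val_two, Matrix.cons_val_three, Matrix.cons_val_four,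
        Matrix.tail_cons, Matrix.cons_val_fin_one] <;>
      first
        | (exact iff_of_false (comparabilityGraph _).irrefl (by decide))
        | (exact iff_of_true (by first | exact e01 | exact e12 | exact e23 | exact e34
                                       | exact e45 | exact e05
                                       | exact e01.symm | exact e12.symm | exact e23.symm
                                       | exact e34.symm | exact e45.symm | exact e05.symm)
            (by decide))
        | (exact iff_of_false
            (by first | exact m02 | exact m03 | exact m04 | exact m13 | exact m14
                      | exact m15 | exact m24 | exact m25 | exact m35
                      | exact fun h => m02 h.symm | exact fun h => m03 h.symm
                      | exact fun h => m04 h.symm | exact fun h => m13 h.symm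
                      | exact fun h => m14 h.symm | exact fun h => m15 h.symm
                      | exact fun h => m24 h.symm | exact fun h => m25 h.symm
                      | exact fun h => m35 h.symm)
            (by decide))


/-- In a poset where everything away from `q` is comparable, the comparability graph of
lower sets has no induced cycles. -/
lemma no_cycle_special (q : P) (hq : ∀ x y : P, x ≠ q → y ≠ q → x ≤ y ∨ y ≤ x)
    (m : ℕ) (hm : 4 ≤ m) :
    IsEmpty (SimpleGraph.cycleGraph m ↪g comparabilityGraph {α : Set P // IsLowerSet α}) := by
  constructor
  intro e
  -- traces are totally ordered
  have trace_total : ∀ α β : {α : Set P // IsLowerSet α},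
      α.1 \ {q} ⊆ β.1 \ {q} ∨ β.1 \ {q} ⊆ α.1 \ {q} := by
    intro α β
    by_cases hs : α.1 \ {q} ⊆ β.1 \ {q}
    · exact Or.inl hs
    · right
      rw [Set.not_subset] at hs
      obtain ⟨a, ⟨haα, haq⟩, ha⟩ := hs
      intro t ⟨htβ, htq⟩
      rcases hq a t haq htq with h | h
      · exact absurd ⟨β.2 h htβ, haq⟩ ha
      · exact ⟨α.2 h haα, htq⟩
  have char : ∀ α β : {α : Set P // IsLowerSet α}, ¬ α.1 ⊆ β.1 → ¬ β.1 ⊆ α.1 →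
      (q ∈ α.1 ∧ q ∉ β.1 ∧ α.1 \ {q} ⊆ β.1 \ {q} ∧ α.1 \ {q} ≠ β.1 \ {q}) ∨
      (q ∈ β.1 ∧ q ∉ α.1 ∧ β.1 \ {q} ⊆ α.1 \ {q} ∧ β.1 \ {q} ≠ α.1 \ {q}) := by
    have main : ∀ α β : {α : Set P // IsLowerSet α}, ¬ α.1 ⊆ β.1 → ¬ β.1 ⊆ α.1 →
        α.1 \ {q} ⊆ β.1 \ {q} →
        q ∈ α.1 ∧ q ∉ β.1 ∧ α.1 \ {q} ⊆ β.1 \ {q} ∧ α.1 \ {q} ≠ β.1 \ {q} := by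
      intro α β hab hba hs
      rw [Set.not_subset] at hab hba
      obtain ⟨u, huα, huβ⟩ := hab
      obtain ⟨v, hvβ, hvα⟩ := hba
      have huq : u = q := by
        by_contra huq
        exact huβ (hs ⟨huα, huq⟩).1
      have hvq : v ≠ q := by
        intro hv
        rw [← huq] at hv
        rw [hv] at hvβ
        exact huβ hvβ
      have hqα : q ∈ α.1 := by rw [← huq]; exact huα
      have hqβ : q ∉ β.1 := by rw [← huq]; exact huβ
      refine ⟨hqα, hqβ, hs, fun h => hvα ?_⟩
      have hv2 : v ∈ β.1 \ {q} := ⟨hvβ, hvq⟩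
      rw [← h] at hv2
      exact hv2.1
    intro α β hab hba
    rcases trace_total α β with hs | hs
    · exact Or.inl (main α β hab hba hs)
    · exact Or.inr (main β α hba hab hs)
  have incomp : ∀ i j : Fin m, i ≠ j → ¬ (SimpleGraph.cycleGraph m).Adj i j →
      ¬ (e i).1 ⊆ (e j).1 ∧ ¬ (e j).1 ⊆ (e i).1 := by
    intro i j hij hna
    have hne : e i ≠ e j := fun h => hij (e.injective h)
    have hnadj : ¬ (comparabilityGraph _).Adj (e i) (e j) := fun h => hna (e.map_rel_iff.mp h)
    constructor
    · intro h; exact hnadj ⟨hne, Or.inl h⟩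
    · intro h; exact hnadj ⟨hne, Or.inr h⟩
  have edge : ∀ i j : Fin m, (SimpleGraph.cycleGraph m).Adj i j → q ∈ (e i).1 → q ∉ (e j).1 →
      (e j).1 \ {q} ⊆ (e i).1 \ {q} := by
    intro i j hadj hqi hqj
    have : (comparabilityGraph _).Adj (e i) (e j) := e.map_rel_iff.mpr hadj
    rcases this.2 with h | h
    · exact absurd (h hqi) hqj
    · exact fun t ht => ⟨h ht.1, ht.2⟩
  -- now split on m
  rcases Nat.lt_or_ge m 6 with h6 | h6
  · interval_cases m
    · -- m = 4
      have i02 := incomp 0 2 (by decide) (by decide)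
      have i13 := incomp 1 3 (by decide) (by decide)
      have h02 := char _ _ i02.1 i02.2
      have h13 := char _ _ i13.1 i13.2
      have a01 : (SimpleGraph.cycleGraph 4).Adj 0 1 := by decide
      have a10 : (SimpleGraph.cycleGraph 4).Adj 1 0 := by decide
      have a12 : (SimpleGraph.cycleGraph 4).Adj 1 2 := by decide
      have a21 : (SimpleGraph.cycleGraph 4).Adj 2 1 := by decide
      have a23 : (SimpleGraph.cycleGraph 4).Adj 2 3 := by decide
      have a32 : (SimpleGraph.cycleGraph 4).Adj 3 2 := by decide
      have a30 : (SimpleGraph.cycleGraph 4).Adj 3 0 := by decide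
      have a03 : (SimpleGraph.cycleGraph 4).Adj 0 3 := by decide
      rcases h02 with ⟨q0, nq2, s02, ne02⟩ | ⟨q2, nq0, s20, ne20⟩ <;>
        rcases h13 with ⟨q1, nq3, s13, ne13⟩ | ⟨q3, nq1, s31, ne31⟩
      · have t21 := edge 1 2 a12 q1 nq2
        have t30 := edge 0 3 a03 q0 nq3
        exact ne02 (Set.Subset.antisymm s02 (t21.trans (s13.trans t30)))
      · have t10 := edge 0 1 a01 q0 nq1
        have t23 := edge 3 2 a32 q3 nq2
        exact ne02 (Set.Subset.antisymm s02 (t23.trans (s31.trans t10)))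
      · have t01 := edge 1 0 a10 q1 nq0
        have t32 := edge 2 3 a23 q2 nq3
        exact ne20 (Set.Subset.antisymm s20 (t01.trans (s13.trans t32)))
      · have t03 := edge 3 0 a30 q3 nq0
        have t12 := edge 2 1 a21 q2 nq1
        exact ne20 (Set.Subset.antisymm s20 (t03.trans (s31.trans t12)))
    · -- m = 5
      have i02 := incomp 0 2 (by decide) (by decide)
      have i24 := incomp 2 4 (by decide) (by decide)
      have i14 := incomp 1 4 (by decide) (by decide)
      have i13 := incomp 1 3 (by decide) (by decide)
      have i03 := incomp 0 3 (by decide) (by decide)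
      have h02 := char _ _ i02.1 i02.2
      have h24 := char _ _ i24.1 i24.2
      have h14 := char _ _ i14.1 i14.2
      have h13 := char _ _ i13.1 i13.2
      have h03 := char _ _ i03.1 i03.2
      -- parity contradiction on membership of q
      rcases h02 with ⟨q0, nq2, -⟩ | ⟨q2, nq0, -⟩ <;>
        rcases h24 with ⟨q2', nq4, -⟩ | ⟨q4, nq2', -⟩ <;>
        rcases h14 with ⟨q1, nq4', -⟩ | ⟨q4', nq1, -⟩ <;>
        rcases h13 with ⟨q1', nq3, -⟩ | ⟨q3, nq1', -⟩ <;>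
        rcases h03 with ⟨q0', nq3', -⟩ | ⟨q3', nq0', -⟩ <;>
        first | exact absurd q0 nq0 | exact absurd q2 nq2 | exact absurd q4 nq4
              | exact absurd q1 nq1 | exact absurd q3 nq3
              | exact absurd q2' nq2 | exact absurd q2 nq2' | exact absurd q2' nq2'
              | exact absurd q4' nq4 | exact absurd q4 nq4' | exact absurd q4' nq4'
              | exact absurd q1' nq1 | exact absurd q1 nq1' | exact absurd q1' nq1'
              | exact absurd q3' nq3 | exact absurd q3 nq3' | exact absurd q3' nq3'
              | exact absurd q0' nq0 | exact absurd q0 nq0' | exact absurd q0' nq0'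
  · -- m ≥ 6
    obtain ⟨k, rfl⟩ : ∃ k, m = 6 + k := ⟨m - 6, by omega⟩
    have i02 := incomp ⟨0, by omega⟩ ⟨2, by omega⟩ (by simp [Fin.ext_iff])
      (cyc_nonadj _ _ (by simp) (by simp; omega))
    have i24 := incomp ⟨2, by omega⟩ ⟨4, by omega⟩ (by simp [Fin.ext_iff])
      (cyc_nonadj _ _ (by simp) (by simp; omega))
    have i04 := incomp ⟨0, by omega⟩ ⟨4, by omega⟩ (by simp [Fin.ext_iff])
      (cyc_nonadj _ _ (by simp) (by simp; omega))
    have h02 := char _ _ i02.1 i02.2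
    have h24 := char _ _ i24.1 i24.2
    have h04 := char _ _ i04.1 i04.2
    rcases h02 with ⟨q0, nq2, -⟩ | ⟨q2, nq0, -⟩ <;>
      rcases h24 with ⟨q2', nq4, -⟩ | ⟨q4, nq2', -⟩ <;>
      rcases h04 with ⟨q0', nq4', -⟩ | ⟨q4', nq0', -⟩ <;>
      first | exact absurd q0 nq0 | exact absurd q0' nq0 | exact absurd q0 nq0'
            | exact absurd q0' nq0'
            | exact absurd q2 nq2 | exact absurd q2' nq2 | exact absurd q2 nq2'
            | exact absurd q2' nq2'
            | exact absurd q4 nq4 | exact absurd q4' nq4 | exact absurd q4 nq4'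
            | exact absurd q4' nq4'

end Stmt11Aux

namespace Stmt11Aux

variable {P : Type*} [PartialOrder P]

/-- Incomparability. -/
def Icp (x y : P) : Prop := ¬ x ≤ y ∧ ¬ y ≤ x

/-- A "2+2"-like configuration. -/
def Cfg (P : Type*) [PartialOrder P] : Prop :=
  ∃ x y z w : P, x < y ∧ z < w ∧ ¬x ≤ z ∧ ¬z ≤ x ∧ ¬y ≤ w ∧ ¬w ≤ y

lemma cmp_of_not_icp {u v : P} (h : ¬ Icp u v) : u ≤ v ∨ v ≤ u := by
  by_contra h2
  push_neg at h2
  exact h ⟨h2.1, h2.2⟩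

lemma config_of_two (hA3 : ∀ u v w : P, Icp u v → Icp v w → Icp u w → False)
    {a b c d : P} (hab : Icp a b) (hcd : Icp c d)
    (hac : a ≠ c) (had : a ≠ d) (hbc : b ≠ c) (hbd : b ≠ d) : Cfg P := by
  -- some cross comparability: c ~ a or c ~ b
  have main0 : ∀ a b : P, Icp a b → a ≠ c → a ≠ d → b ≠ c → b ≠ d →
      (a ≤ c ∨ c ≤ a) → Cfg P := by
    clear hab hac had hbc hbd
    clear a b
    intro a b hab hac had hbc hbd hca
    rcases hca with h1 | h1
    · -- a < c
      have hltac : a < c := lt_of_le_of_ne h1 hac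
      by_cases hIad : Icp a d
      · have hbd2 := cmp_of_not_icp (fun h => hA3 a b d hab h hIad)
        rcases hbd2 with h2 | h2
        · -- b < d
          exact ⟨a, c, b, d, hltac, lt_of_le_of_ne h2 hbd, hab.1, hab.2, hcd.1, hcd.2⟩
        · -- d < b
          by_cases hIbc : Icp b c
          · exact ⟨a, c, d, b, hltac, lt_of_le_of_ne h2 (fun h => hbd h.symm),
              hIad.1, hIad.2, hIbc.2, hIbc.1⟩
          · rcases cmp_of_not_icp hIbc with h3 | h3
            · exact absurd (h2.trans h3) hcd.2
            · exact absurd (h1.trans h3) hab.1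
      · rcases cmp_of_not_icp hIad with h2 | h2
        · -- a < d
          by_cases hIbc : Icp b c
          · have hbd2 := cmp_of_not_icp (fun h => hA3 b c d hIbc hcd h)
            rcases hbd2 with h3 | h3
            · exact ⟨a, c, b, d, hltac, lt_of_le_of_ne h3 hbd, hab.1, hab.2, hcd.1, hcd.2⟩
            · exact absurd (h2.trans h3) hab.1
          · rcases cmp_of_not_icp hIbc with h3 | h3
            · exact ⟨b, c, a, d, lt_of_le_of_ne h3 hbc, lt_of_le_of_ne h2 had,
                hab.2, hab.1, hcd.1, hcd.2⟩
            · exact absurd (h1.trans h3) hab.1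
        · exact absurd (h2.trans h1) hcd.2
    · -- c < a
      have hltca : c < a := lt_of_le_of_ne h1 (fun h => hac h.symm)
      by_cases hIad : Icp a d
      · have hbd2 := cmp_of_not_icp (fun h => hA3 a b d hab h hIad)
        rcases hbd2 with h2 | h2
        · -- b < d
          by_cases hIbc : Icp b c
          · exact ⟨c, a, b, d, hltca, lt_of_le_of_ne h2 hbd,
              hIbc.2, hIbc.1, hIad.1, hIad.2⟩
          · rcases cmp_of_not_icp hIbc with h3 | h3
            · exact absurd (h3.trans h1) hab.2
            · exact absurd (h3.trans h2) hcd.1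
        · -- d < b
          exact ⟨c, a, d, b, hltca, lt_of_le_of_ne h2 (fun h => hbd h.symm),
            hcd.1, hcd.2, hab.1, hab.2⟩
      · rcases cmp_of_not_icp hIad with h2 | h2
        · exact absurd (h1.trans h2) hcd.1
        · -- d < a
          by_cases hIbc : Icp b c
          · have hbd2 := cmp_of_not_icp (fun h => hA3 b c d hIbc hcd h)
            rcases hbd2 with h3 | h3
            · exact absurd (h3.trans h2) hab.2
            · exact ⟨d, b, c, a, lt_of_le_of_ne h3 (fun h => hbd h.symm), hltca,
                hcd.2, hcd.1, hab.2, hab.1⟩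
          · rcases cmp_of_not_icp hIbc with h3 | h3
            · exact absurd (h3.trans h1) hab.2
            · exact ⟨c, b, d, a, lt_of_le_of_ne h3 (fun h => hbc h.symm),
                lt_of_le_of_ne h2 (fun h => had h.symm),
                hcd.1, hcd.2, hab.2, hab.1⟩
  by_cases hIac : Icp a c
  · by_cases hIbc : Icp b c
    · exact absurd hIac (fun h => hA3 a b c hab hIbc h)
    · exact main0 b a ⟨hab.2, hab.1⟩ hbc hbd hac had (cmp_of_not_icp hIbc)
  · exact main0 a b hab hac had hbc hbd (cmp_of_not_icp hIac)

lemma star (hA3 : ∀ u v w : P, Icp u v → Icp v w → Icp u w → False)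
    (hNC : ¬ Cfg P) {a b : P} (hab : Icp a b) :
    ∃ q : P, (∃ r, Icp q r) ∧ ∀ x y : P, Icp x y → q = x ∨ q = y := by
  by_cases hall : ∀ x y : P, Icp x y → a = x ∨ a = y
  · exact ⟨a, ⟨b, hab⟩, hall⟩
  · push_neg at hall
    obtain ⟨c, d, hcd, hac, had⟩ := hall
    have hbpair : ∃ c', Icp b c' ∧ c' ≠ a := by
      by_cases hbc : b = c
      · exact ⟨d, hbc ▸ hcd, fun h => had h.symm⟩
      · by_cases hbd : b = d
        · exact ⟨c, hbd ▸ ⟨hcd.2, hcd.1⟩, fun h => hac h.symm⟩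
        · exact absurd (config_of_two hA3 hab hcd hac had hbc hbd) hNC
    obtain ⟨c', hbc', hc'a⟩ := hbpair
    refine ⟨b, ⟨c', hbc'⟩, ?_⟩
    intro x y hxy
    by_contra hcon
    push_neg at hcon
    obtain ⟨hbx, hby⟩ := hcon
    have hanb : a ≠ b := fun h => (h ▸ hab).1 le_rfl
    have K : ∀ u v : P, Icp u v → b ≠ u → b ≠ v → a = u → False := by
      intro u v huv hbu hbv hau
      rw [← hau] at huv
      -- huv : Icp a v, hbv : b ≠ v
      have hva : v ≠ a := by
        intro h
        rw [h] at huv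
        exact huv.1 le_rfl
      by_cases hvc' : v = c'
      · exact hA3 a b c' hab hbc' (hvc' ▸ huv)
      · exact hNC (config_of_two hA3 huv hbc' hanb (fun h => hc'a h.symm)
          (fun h => hbv h.symm) hvc')
    by_cases hax : a = x
    · exact K x y hxy hbx hby hax
    · by_cases hay : a = y
      · exact K y x ⟨hxy.2, hxy.1⟩ hby hbx hay
      · exact hNC (config_of_two hA3 hab hxy hax hay hbx hby)

end Stmt11Aux

open Stmt11Aux in
theorem stmt11 (P : Type*) [Finite P] [PartialOrder P] :
    (∀ m : ℕ, 4 ≤ m →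
        IsEmpty (SimpleGraph.cycleGraph m ↪g
          comparabilityGraph {α : Set P // IsLowerSet α})) ↔
      ((∀ a b : P, a ≤ b ∨ b ≤ a) ∨
        ∃ q : {p : P // ¬ ∀ r : P, p ≤ r ∨ r ≤ p},
          (∀ r : {p : P // ¬ ∀ r : P, p ≤ r ∨ r ≤ p},
              r ≠ q → ¬((r : P) ≤ (q : P) ∨ (q : P) ≤ (r : P))) ∧
          (∀ r s : {p : P // ¬ ∀ r : P, p ≤ r ∨ r ≤ p},
              r ≠ q → s ≠ q → ((r : P) ≤ (s : P) ∨ (s : P) ≤ (r : P)))) := by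
  constructor
  · intro hL
    by_cases hch : ∀ a b : P, a ≤ b ∨ b ≤ a
    · exact Or.inl hch
    · right
      push_neg at hch
      obtain ⟨a, b, hab1, hab2⟩ := hch
      have hA3 : ∀ u v w : P, Icp u v → Icp v w → Icp u w → False := by
        intro u v w h1 h2 h3
        exact (hL 6 (by norm_num)).false (c6_embed h1.1 h1.2 h2.1 h2.2 h3.1 h3.2).some
      have hNC : ¬ Cfg P := by
        rintro ⟨x, y, z, w, h1, h2, h3, h4, h5, h6⟩
        exact (hL 4 (by norm_num)).false (c4_embed h1 h2 h3 h4 h5 h6).some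
      obtain ⟨q, ⟨r, hqr⟩, hstar⟩ := star hA3 hNC ⟨hab1, hab2⟩
      have hq'' : ¬ ∀ s : P, q ≤ s ∨ s ≤ q := by
        push_neg
        exact ⟨r, hqr.1, hqr.2⟩
      refine ⟨⟨q, hq''⟩, ?_, ?_⟩
      · intro r0 hne
        have hr0 := r0.2
        push_neg at hr0
        obtain ⟨s, hs1, hs2⟩ := hr0
        have hval : r0.1 ≠ q := fun h => hne (Subtype.ext h)
        rcases hstar r0.1 s ⟨hs1, hs2⟩ with h | h
        · exact absurd h.symm hval
        · rintro (hc | hc)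
          · exact hs1 (by rw [← h]; exact hc)
          · exact hs2 (by rw [← h]; exact hc)
      · intro r0 s0 hner hnes
        by_contra hcon
        push_neg at hcon
        rcases hstar r0.1 s0.1 ⟨hcon.1, hcon.2⟩ with h | h
        · exact hner (Subtype.ext h.symm)
        · exact hnes (Subtype.ext h.symm)
  · intro hR m hm
    rcases hR with hch | ⟨q, hq1, hq2⟩
    · constructor
      intro e
      have htot : ∀ α β : {α : Set P // IsLowerSet α}, α.1 ⊆ β.1 ∨ β.1 ⊆ α.1 := by
        intro α β
        by_cases h : α.1 ⊆ β.1
        · exact Or.inl h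
        · right
          rw [Set.not_subset] at h
          obtain ⟨u, huα, huβ⟩ := h
          intro t htβ
          rcases hch u t with h' | h'
          · exact absurd (β.2 h' htβ) huβ
          · exact α.2 h' huα
      obtain ⟨k, rfl⟩ : ∃ k, m = 4 + k := ⟨m - 4, by omega⟩
      have hne : (⟨0, by omega⟩ : Fin (4+k)) ≠ ⟨2, by omega⟩ := by simp [Fin.ext_iff]
      have hna := cyc_nonadj (⟨0, by omega⟩ : Fin (4+k)) ⟨2, by omega⟩ (by simp) (by simp; omega)
      have hadj : (comparabilityGraph _).Adj (e ⟨0, by omega⟩) (e ⟨2, by omega⟩) := by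
        refine ⟨fun h => hne (e.injective h), ?_⟩
        rcases htot (e ⟨0, by omega⟩) (e ⟨2, by omega⟩) with h | h
        · exact Or.inl h
        · exact Or.inr h
      exact hna (e.map_rel_iff.mp hadj)
    · have hq : ∀ x y : P, x ≠ q.1 → y ≠ q.1 → x ≤ y ∨ y ≤ x := by
        intro x y hx hy
        by_cases hxall : ∀ r : P, x ≤ r ∨ r ≤ x
        · exact hxall y
        · by_cases hyall : ∀ r : P, y ≤ r ∨ r ≤ y
          · exact (hyall x).symm
          · exact hq2 ⟨x, hxall⟩ ⟨y, hyall⟩ (fun h => hx (congrArg Subtype.val h))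
              (fun h => hy (congrArg Subtype.val h))
      exact no_cycle_special q.1 hq m hm
end
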